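/- Define U± = (σ_x ⊗ I ± i · I ⊗ σ_x)/√2 on ℂ² ⊗ ℂ². Then U± are unitary, U± |11⟩ = (|01⟩ ± i|10⟩)/√2, and while the initial state satisfies C(|11⟩) = 0, the state after the jump is maximally entangled: C(U± |11⟩) = 1. -/

import Mathlib

open Matrix Kronecker Complex

noncomputable section

/-- The Pauli matrix `σ_x`. -/
def sigmaX : Matrix (Fin 2) (Fin 2) ℂ := !![0, 1; 1, 0]

/-- The Pauli matrix `σ_y`. -/
def sigmaY : Matrix (Fin 2) (Fin 2) ℂ := !![0, -I; I, 0]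

/-- The Pauli matrix `σ_z`. -/
def sigmaZ : Matrix (Fin 2) (Fin 2) ℂ := !![1, 0; 0, -1]

/-- The inner product on `ℂ² ⊗ ℂ² ≃ ℂ^{2×2}`, antilinear in the first argument
(physicists' convention). -/
def inn (ψ φ : Fin 2 × Fin 2 → ℂ) : ℂ := ∑ k, (starRingEnd ℂ) (ψ k) * φ k

/-- The antilinear conjugation `T̄`, complex-conjugating the coefficients in the
computational basis. -/
def conjT (φ : Fin 2 × Fin 2 → ℂ) : Fin 2 × Fin 2 → ℂ := fun k => (starRingEnd ℂ) (φ k)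

/-- `χ(φ) = ⟨T̄φ | (σ_y ⊗ σ_y) φ⟩`. -/
def chi (φ : Fin 2 × Fin 2 → ℂ) : ℂ := inn (conjT φ) ((sigmaY ⊗ₖ sigmaY).mulVec φ)

/-- The computational basis vector `|ij⟩`. -/
def ket (i j : Fin 2) : Fin 2 × Fin 2 → ℂ := fun k => if k = (i, j) then 1 else 0

end


lemma h2aux : ((Real.sqrt 2 : ℂ))⁻¹ * ((Real.sqrt 2 : ℂ))⁻¹ = 2⁻¹ := by
  rw [← mul_inv]; norm_cast
  rw [Real.mul_self_sqrt (by norm_num)]; push_cast; ring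

lemma h2sq : ((Real.sqrt 2 : ℂ))⁻¹ ^ 2 = 2⁻¹ := by rw [sq]; exact h2aux

set_option maxHeartbeats 3200000 in
/-- The non-local jump operators `U± = (σ_x ⊗ I ± i I ⊗ σ_x)/√2` are
unitary, map `|11⟩` to `(|01⟩ ± i|10⟩)/√2`, and turn the separable state `|11⟩`
(concurrence `0`) into a maximally entangled state (concurrence `1`). -/
theorem nonlocal_jump_creates_entanglement
    (Uplus Uminus : Matrix (Fin 2 × Fin 2) (Fin 2 × Fin 2) ℂ)
    (hplus : Uplus = ((Real.sqrt 2 : ℂ))⁻¹ •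
      (sigmaX ⊗ₖ (1 : Matrix (Fin 2) (Fin 2) ℂ)
        + Complex.I • ((1 : Matrix (Fin 2) (Fin 2) ℂ) ⊗ₖ sigmaX)))
    (hminus : Uminus = ((Real.sqrt 2 : ℂ))⁻¹ •
      (sigmaX ⊗ₖ (1 : Matrix (Fin 2) (Fin 2) ℂ)
        - Complex.I • ((1 : Matrix (Fin 2) (Fin 2) ℂ) ⊗ₖ sigmaX))) :
    Uplus ∈ Matrix.unitaryGroup (Fin 2 × Fin 2) ℂ ∧
    Uminus ∈ Matrix.unitaryGroup (Fin 2 × Fin 2) ℂ ∧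
    Uplus.mulVec (ket 1 1) = ((Real.sqrt 2 : ℂ))⁻¹ • (ket 0 1 + Complex.I • ket 1 0) ∧
    Uminus.mulVec (ket 1 1) = ((Real.sqrt 2 : ℂ))⁻¹ • (ket 0 1 - Complex.I • ket 1 0) ∧
    ‖chi (ket 1 1)‖ = 0 ∧
    ‖chi (Uplus.mulVec (ket 1 1))‖ = 1 ∧
    ‖chi (Uminus.mulVec (ket 1 1))‖ = 1 := by
  have hup : Uplus.mulVec (ket 1 1)
      = ((Real.sqrt 2 : ℂ))⁻¹ • (ket 0 1 + Complex.I • ket 1 0) := by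
    subst hplus
    funext k
    obtain ⟨i, j⟩ := k
    fin_cases i <;> fin_cases j <;>
      simp [Matrix.mulVec, dotProduct, Fintype.sum_prod_type, Fin.sum_univ_two,
        sigmaX, ket, Matrix.one_apply, Prod.ext_iff]
  have hum : Uminus.mulVec (ket 1 1)
      = ((Real.sqrt 2 : ℂ))⁻¹ • (ket 0 1 - Complex.I • ket 1 0) := by
    subst hminus
    funext k
    obtain ⟨i, j⟩ := k
    fin_cases i <;> fin_cases j <;>
      simp [Matrix.mulVec, dotProduct, Fintype.sum_prod_type, Fin.sum_univ_two,
        sigmaX, ket, Matrix.one_apply, Prod.ext_iff]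
  refine ⟨?_, ?_, hup, hum, ?_, ?_, ?_⟩
  · subst hplus
    rw [Matrix.mem_unitaryGroup_iff]
    ext ⟨i, j⟩ ⟨k, l⟩
    fin_cases i <;> fin_cases j <;> fin_cases k <;> fin_cases l <;>
      simp [Matrix.mul_apply, Fintype.sum_prod_type, Fin.sum_univ_two, sigmaX,
        Matrix.one_apply, Prod.ext_iff, Matrix.conjTranspose_apply, map_inv₀]
    all_goals try ring
    all_goals (rw [Complex.I_sq, h2sq]; norm_num)
  · subst hminus
    rw [Matrix.mem_unitaryGroup_iff]
    ext ⟨i, j⟩ ⟨k, l⟩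
    fin_cases i <;> fin_cases j <;> fin_cases k <;> fin_cases l <;>
      simp [Matrix.mul_apply, Fintype.sum_prod_type, Fin.sum_univ_two, sigmaX,
        Matrix.one_apply, Prod.ext_iff, Matrix.conjTranspose_apply, map_inv₀]
    all_goals try ring
    all_goals (rw [Complex.I_sq, h2sq]; norm_num)
  · simp [chi, inn, conjT, Matrix.mulVec, dotProduct, Fintype.sum_prod_type,
      Fin.sum_univ_two, sigmaY, ket, Prod.ext_iff]
  · rw [hup]
    have : chi (((Real.sqrt 2 : ℂ))⁻¹ • (ket 0 1 + Complex.I • ket 1 0)) = Complex.I := by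
      simp [chi, inn, conjT, Matrix.mulVec, dotProduct, Fintype.sum_prod_type,
        Fin.sum_univ_two, sigmaY, ket, Prod.ext_iff, map_inv₀]
      ring_nf
      rw [h2sq]; ring
    rw [this]; simp
  · rw [hum]
    have : chi (((Real.sqrt 2 : ℂ))⁻¹ • (ket 0 1 - Complex.I • ket 1 0)) = -Complex.I := by
      simp [chi, inn, conjT, Matrix.mulVec, dotProduct, Fintype.sum_prod_type,
        Fin.sum_univ_two, sigmaY, ket, Prod.ext_iff, map_inv₀]
      ring_nf
      rw [h2sq]; ring
    rw [this]; simp
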